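/- (Lemma 2.2.) Suppose τ𝒳 = 𝒳. If A → B → C → ΣA is a distinguished triangle in 𝖳, then A → B is an 𝒳-monomorphism if and only if B → C is an 𝒳-epimorphism. -/

import Mathlib

/-!
STATEMENT 3 (Lemma 2.2).  Let `k` be an algebraically closed field and `T` a `k`-linear
triangulated category with finite-dimensional Hom-spaces, split idempotents and a Serre
functor `S`; let `τ = Σ⁻¹ ∘ S` and let `𝒳` be a class of objects closed under
isomorphisms, finite direct sums and direct summands with `τ𝒳 = 𝒳`.  If
`A → B → C → ΣA` is a distinguished triangle, then `A → B` is an `𝒳`-monomorphism if and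
only if `B → C` is an `𝒳`-epimorphism.
-/

open CategoryTheory CategoryTheory.Limits CategoryTheory.Pretriangulated

/-- `f : A ⟶ B` is an `𝒳`-monomorphism: every morphism from `A` to an object of `𝒳`
factors through `f`. -/
def XMono {C : Type*} [Category C] (𝒳 : Set C) {A B : C} (f : A ⟶ B) : Prop :=
  ∀ (X : C), X ∈ 𝒳 → ∀ (g : A ⟶ X), ∃ h : B ⟶ X, f ≫ h = g

/-- `f : A ⟶ B` is an `𝒳`-epimorphism: every morphism from an object of `𝒳` to `B`
factors through `f`. -/
def XEpi {C : Type*} [Category C] (𝒳 : Set C) {A B : C} (f : A ⟶ B) : Prop :=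
  ∀ (X : C), X ∈ 𝒳 → ∀ (g : X ⟶ B), ∃ h : X ⟶ A, h ≫ f = g

/-- The data of a Serre functor `S` on a `k`-linear category: a `k`-linear autoequivalence
together with isomorphisms `Hom(A,B) ≅ Hom(B, S A)^∨`, natural in `A` and `B`. -/
structure SerreFunctorData (k : Type*) [Field k] (C : Type*) [Category C]
    [Preadditive C] [Linear k C] where
  S : C ⥤ C
  additive : S.Additive
  linear : S.Linear k
  isEquivalence : S.IsEquivalence
  pairing : ∀ A B : C, (A ⟶ B) ≃ₗ[k] Module.Dual k (B ⟶ S.obj A)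
  natB : ∀ {A B B' : C} (f : A ⟶ B) (g : B ⟶ B') (h : B' ⟶ S.obj A),
    pairing A B' (f ≫ g) h = pairing A B f (g ≫ h)
  natA : ∀ {A A' B : C} (e : A' ⟶ A) (f : A ⟶ B) (h : B ⟶ S.obj A'),
    pairing A' B (e ≫ f) h = pairing A B f (h ≫ S.map e)

/-- Nondegeneracy of the Serre pairing in the first variable. -/
lemma SerreFunctorData.left_zero {k : Type*} [Field k] {C : Type*} [Category C]
    [Preadditive C] [Linear k C] (SD : SerreFunctorData k C) {P Q : C} (u : P ⟶ Q)
    (hu : ∀ w : Q ⟶ SD.S.obj P, SD.pairing P Q u w = 0) : u = 0 := by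
  have : SD.pairing P Q u = 0 := LinearMap.ext hu
  simpa using (SD.pairing P Q).map_eq_zero_iff.mp this

/-- Nondegeneracy of the Serre pairing in the second variable. -/
lemma SerreFunctorData.right_zero {k : Type*} [Field k] {C : Type*} [Category C]
    [Preadditive C] [Linear k C] (SD : SerreFunctorData k C) {P Q : C}
    (q : Q ⟶ SD.S.obj P)
    (hq : ∀ p : P ⟶ Q, SD.pairing P Q p q = 0) : q = 0 := by
  rw [← Module.forall_dual_apply_eq_zero_iff k q]
  intro φ
  have := hq ((SD.pairing P Q).symm φ)
  rwa [(SD.pairing P Q).apply_symm_apply] at this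

theorem XMono_iff_XEpi_of_distTriang
    (k : Type*) [Field k] [IsAlgClosed k]
    {C : Type*} [Category C] [Preadditive C] [Linear k C] [HasZeroObject C]
    [HasShift C ℤ] [∀ n : ℤ, (CategoryTheory.shiftFunctor C n).Additive]
    [Pretriangulated C] [HasBinaryBiproducts C]
    [∀ A B : C, FiniteDimensional k (A ⟶ B)] [IsIdempotentComplete C]
    (SD : SerreFunctorData k C)
    (𝒳 : Set C)
    (hiso : ∀ {A B : C}, (A ≅ B) → A ∈ 𝒳 → B ∈ 𝒳)
    (hsum : ∀ {A B : C}, A ∈ 𝒳 → B ∈ 𝒳 → (A ⊞ B) ∈ 𝒳)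
    (hsummand : ∀ {A B : C} (i : A ⟶ B) (r : B ⟶ A), i ≫ r = 𝟙 A → B ∈ 𝒳 → A ∈ 𝒳)
    -- `τ𝒳 = 𝒳`, where `τ = Σ⁻¹ ∘ S`:
    (hτ : ∀ X : C, X ∈ 𝒳 ↔ ((SD.S.obj X)⟦(-1 : ℤ)⟧) ∈ 𝒳)
    (A B Z : C) (f : A ⟶ B) (g : B ⟶ Z) (h : Z ⟶ A⟦(1 : ℤ)⟧)
    (hT : Triangle.mk f g h ∈ distTriang C) :
    XMono 𝒳 f ↔ XEpi 𝒳 g := by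
  haveI := SD.isEquivalence
  constructor
  · -- XMono f → XEpi g
    intro hmono X hX p
    -- suffices p ≫ h = 0
    have hph : p ≫ h = 0 := by
      apply SD.left_zero
      intro w
      rw [SD.natB]
      -- show h ≫ w = 0
      have hτX : ((SD.S.obj X)⟦(-1 : ℤ)⟧) ∈ 𝒳 := (hτ X).mp hX
      -- w : A⟦1⟧ ⟶ S X; pull back along the shift equivalence
      let ε : ((SD.S.obj X)⟦(-1 : ℤ)⟧)⟦(1 : ℤ)⟧ ≅ SD.S.obj X := shiftNegShift _ (1 : ℤ)
      obtain ⟨w', hw'⟩ := (shiftFunctor C (1 : ℤ)).map_surjective (w ≫ ε.inv)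
      obtain ⟨t, ht⟩ := hmono _ hτX w'
      have hw : w = w'⟦(1 : ℤ)⟧' ≫ ε.hom := by
        rw [hw']; simp
      have hhf : h ≫ f⟦(1 : ℤ)⟧' = 0 := comp_distTriang_mor_zero₃₁ _ hT
      rw [hw, ← ht, Functor.map_comp]
      rw [← Category.assoc, ← Category.assoc, hhf, zero_comp, zero_comp]
      simp
    obtain ⟨q, hq⟩ := Triangle.coyoneda_exact₃ _ hT p hph
    exact ⟨q, hq.symm⟩
  · -- XEpi g → XMono f
    intro hepi X hX a
    -- Y := S⁻¹(X⟦1⟧) lies in 𝒳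
    let E := SD.S.asEquivalence
    let Y : C := E.inverse.obj (X⟦(1 : ℤ)⟧)
    have ηiso : SD.S.obj Y ≅ X⟦(1 : ℤ)⟧ := E.counitIso.app (X⟦(1 : ℤ)⟧)
    have hY : Y ∈ 𝒳 := by
      rw [hτ Y]
      refine hiso ?_ hX
      exact ((shiftEquiv C (1 : ℤ)).unitIso.app X).trans
        ((shiftFunctor C (-1 : ℤ)).mapIso ηiso.symm)
    -- show h ≫ a⟦1⟧ = 0
    have key : h ≫ a⟦(1 : ℤ)⟧' = 0 := by
      have hq0 : h ≫ a⟦(1 : ℤ)⟧' ≫ ηiso.inv = 0 := by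
        apply SD.right_zero (P := Y)
        intro p
        obtain ⟨p', hp'⟩ := hepi _ hY p
        rw [← hp', SD.natB]
        have : g ≫ h ≫ a⟦(1 : ℤ)⟧' ≫ ηiso.inv = 0 := by
          have := comp_distTriang_mor_zero₂₃ _ hT
          change g ≫ h = 0 at this
          rw [← Category.assoc, ← Category.assoc, Category.assoc g h,
            ← Category.assoc g h] at *
          rw [this, zero_comp, zero_comp]
        rw [this]
        simp
      have := hq0 =≫ ηiso.hom
      simpa using this
    -- factor a⟦1⟧ through f⟦1⟧ using the double rotation
    have hT2 := rot_of_distTriang _ (rot_of_distTriang _ hT)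
    obtain ⟨ψ, hψ⟩ := Triangle.yoneda_exact₂ _ hT2 (a⟦(1 : ℤ)⟧') (by
      exact key)
    -- hψ : a⟦1⟧ = (-f⟦1⟧') ≫ ψ
    change a⟦(1 : ℤ)⟧' = (-f⟦(1 : ℤ)⟧') ≫ ψ at hψ
    obtain ⟨t, ht⟩ := (shiftFunctor C (1 : ℤ)).map_surjective (X := B) (Y := X) (-ψ)
    refine ⟨t, (shiftFunctor C (1 : ℤ)).map_injective ?_⟩
    rw [Functor.map_comp, ht, hψ]
    exact (Preadditive.comp_neg _ _).trans (Preadditive.neg_comp _ _).symm
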